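/- For every τ in the upper half-plane ℍ, λ(τ) ≠ 0 and λ(τ) ≠ 1, and the lambda function satisfies λ(−(τ+1)/τ) = 1 − 1/λ(τ) and λ(−1/(τ+1)) = 1/(1 − λ(τ)), where −(τ+1)/τ and −1/(τ+1) are the images of τ under the fractional linear actions of W = [[−1,−1],[1,0]] and W² = [[0,1],[−1,−1]] in SL₂(ℤ). -/

import Mathlib

noncomputable def theta00 (τ : ℂ) : ℂ :=
  ∑' n : ℤ, Complex.exp (Real.pi * Complex.I * (n : ℂ) ^ 2 * τ)

/-- Theta constant `θ01(τ) = ∑_{n∈ℤ} (−1)ⁿ exp(πi n² τ)`. -/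
noncomputable def theta01 (τ : ℂ) : ℂ :=
  ∑' n : ℤ, (-1 : ℂ) ^ n * Complex.exp (Real.pi * Complex.I * (n : ℂ) ^ 2 * τ)

/-- Theta constant `θ10(τ) = ∑_{n∈ℤ} exp(πi (n+1/2)² τ)`. -/
noncomputable def theta10 (τ : ℂ) : ℂ :=
  ∑' n : ℤ, Complex.exp (Real.pi * Complex.I * ((n : ℂ) + 1/2) ^ 2 * τ)

/-- The lambda function `λ(τ) = θ10(τ)⁴ / θ00(τ)⁴`. -/
noncomputable def lambdaFn (τ : ℂ) : ℂ := theta10 τ ^ 4 / theta00 τ ^ 4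

open Complex Real

lemma neg_one_zpow_eq (n : ℤ) : (-1 : ℂ) ^ n = cexp (π * I * n) := by
  have : (π * I * (n : ℂ)) = n * (π * I) := by ring
  rw [this, Complex.exp_int_mul, Complex.exp_pi_mul_I]

lemma sq_exp_eq (n : ℤ) : cexp (π * I * (n:ℂ)^2) = (-1:ℂ) ^ n := by
  have h : ((n:ℂ))^2 = ((n^2 : ℤ) : ℂ) := by push_cast; ring
  have h2 : (π * I * ((n:ℂ))^2) = ((n^2 : ℤ) : ℂ) * (π * I) := by rw [h]; ring
  rw [h2, Complex.exp_int_mul, Complex.exp_pi_mul_I, sq]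
  rcases Int.even_or_odd n with he | ho
  · rw [Even.neg_one_zpow (he.mul_right n), Even.neg_one_zpow he]
  · rw [Odd.neg_one_zpow (ho.mul ho), Odd.neg_one_zpow ho]

lemma theta00_eq (τ : ℂ) : theta00 τ = jacobiTheta₂ 0 τ := by
  refine tsum_congr fun n => ?_
  simp [jacobiTheta₂_term]

lemma theta01_eq (τ : ℂ) : theta01 τ = jacobiTheta₂ (1/2) τ := by
  refine tsum_congr fun n => ?_
  rw [jacobiTheta₂_term, neg_one_zpow_eq, ← Complex.exp_add]
  ring_nf

lemma theta10_eq (τ : ℂ) : theta10 τ = cexp (π * I * τ / 4) * jacobiTheta₂ (τ/2) τ := by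
  rw [jacobiTheta₂, ← tsum_mul_left]
  refine tsum_congr fun n => ?_
  rw [jacobiTheta₂_term, ← Complex.exp_add]
  congr 1
  ring

lemma theta00_T (τ : ℂ) : theta00 (τ + 1) = theta01 τ := by
  refine tsum_congr fun n => ?_
  rw [mul_add, Complex.exp_add, mul_one, sq_exp_eq, mul_comm]

lemma theta01_T (τ : ℂ) : theta01 (τ + 1) = theta00 τ := by
  refine tsum_congr fun n => ?_
  rw [mul_add, Complex.exp_add, mul_one, sq_exp_eq, ← mul_assoc]
  rcases Int.even_or_odd n with he | ho
  · rw [Even.neg_one_zpow he]; ring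
  · rw [Odd.neg_one_zpow ho]; ring

lemma theta10_T (τ : ℂ) : theta10 (τ + 1) = cexp (π * I / 4) * theta10 τ := by
  rw [theta10, theta10, ← tsum_mul_left]
  refine tsum_congr fun n => ?_
  have hev : Even (n^2 + n) := by
    have := Int.even_mul_succ_self n
    rwa [show n*(n+1) = n^2+n from by ring] at this
  have key : π * I * ((n:ℂ) + 1/2)^2 * (τ + 1)
      = ((n^2+n : ℤ):ℂ)*(π*I) + π*I/4 + π * I * ((n:ℂ) + 1/2)^2 * τ := by push_cast; ring
  rw [key, Complex.exp_add, Complex.exp_add, Complex.exp_int_mul, Complex.exp_pi_mul_I,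
    Even.neg_one_zpow hev, one_mul]

section Slaws
variable {τ : ℂ}

lemma tau_ne_zero (hτ : 0 < τ.im) : τ ≠ 0 := fun h => by simp [h] at hτ

lemma sqfac_ne_zero (hτ : 0 < τ.im) : (-I * τ) ^ (1/2 : ℂ) ≠ 0 := by
  rw [Ne, cpow_eq_zero_iff, not_and_or]
  exact Or.inl (mul_ne_zero (neg_ne_zero.mpr I_ne_zero) (tau_ne_zero hτ))

lemma exp_cancel_aux (a J c : ℂ) (hc : c ≠ 0) :
    c * (cexp a * (1/c * cexp (-a) * J)) = J := by
  have h : cexp a * cexp (-a) = 1 := by rw [← Complex.exp_add]; simp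
  calc c * (cexp a * (1/c * cexp (-a) * J))
      = (c * (1/c)) * ((cexp a * cexp (-a)) * J) := by ring
    _ = J := by rw [mul_one_div_cancel hc, h, one_mul, one_mul]

lemma exp_cancel_aux2 (a J c : ℂ) (hc : c ≠ 0) : c * (1/c * cexp a * J) = cexp a * J := by
  calc c * (1/c * cexp a * J) = (c * (1/c)) * (cexp a * J) := by ring
    _ = cexp a * J := by rw [mul_one_div_cancel hc, one_mul]

lemma theta00_S (hτ : 0 < τ.im) :
    theta00 (-1/τ) = (-I * τ) ^ (1/2 : ℂ) * theta00 τ := by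
  have h1 := sqfac_ne_zero hτ
  have key := jacobiTheta₂_functional_equation 0 τ
  rw [zero_pow two_ne_zero, mul_zero, zero_div, Complex.exp_zero, mul_one] at key
  rw [theta00_eq, theta00_eq, key, ← mul_assoc, mul_one_div_cancel h1, one_mul]

lemma theta01_S (hτ : 0 < τ.im) :
    theta01 (-1/τ) = (-I * τ) ^ (1/2 : ℂ) * theta10 τ := by
  have h1 := sqfac_ne_zero hτ
  have h0 := tau_ne_zero hτ
  have key := jacobiTheta₂_functional_equation (τ/2) τ
  rw [show (τ/2)/τ = (1/2 : ℂ) from by rw [div_div, mul_comm, ← div_div, div_self h0],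
      show -(π:ℂ) * I * (τ/2)^2 / τ = -((π:ℂ) * I * τ / 4) from by field_simp; ring] at key
  rw [theta01_eq, theta10_eq, key]
  exact (exp_cancel_aux ((π:ℂ) * I * τ / 4) (jacobiTheta₂ (1/2) (-1/τ)) _ h1).symm

lemma theta10_S (hτ : 0 < τ.im) :
    theta10 (-1/τ) = (-I * τ) ^ (1/2 : ℂ) * theta01 τ := by
  have h1 := sqfac_ne_zero hτ
  have h0 := tau_ne_zero hτ
  have key := jacobiTheta₂_functional_equation (1/2) τ
  rw [theta10_eq, theta01_eq, key, exp_cancel_aux2 _ _ _ h1,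
      show (-1/τ)/2 = -((1:ℂ)/(2*τ)) from by ring, jacobiTheta₂_neg_left,
      show ((1:ℂ)/2)/τ = 1/(2*τ) from by rw [div_div],
      show -(π:ℂ) * I * ((1:ℂ)/2)^2 / τ = (π:ℂ) * I * (-1/τ) / 4 from by ring]

end Slaws

section Sums
variable {τ : ℂ}

lemma term00_eq (τ : ℂ) (n : ℤ) :
    cexp ((π:ℂ) * I * (n:ℂ)^2 * τ) = jacobiTheta₂_term n 0 τ := by
  simp [jacobiTheta₂_term]

lemma term01_eq (τ : ℂ) (n : ℤ) :
    (-1:ℂ)^n * cexp ((π:ℂ) * I * (n:ℂ)^2 * τ) = jacobiTheta₂_term n (1/2) τ := by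
  rw [jacobiTheta₂_term, neg_one_zpow_eq, ← Complex.exp_add]
  ring_nf

lemma term10_eq (τ : ℂ) (n : ℤ) :
    cexp ((π:ℂ) * I * ((n:ℂ) + 1/2)^2 * τ)
      = cexp ((π:ℂ) * I * τ / 4) * jacobiTheta₂_term n (τ/2) τ := by
  rw [jacobiTheta₂_term, ← Complex.exp_add]
  congr 1
  ring

lemma hasSum_theta00 (hτ : 0 < τ.im) :
    HasSum (fun n : ℤ => cexp ((π:ℂ) * I * (n:ℂ)^2 * τ)) (theta00 τ) := by
  have h := hasSum_jacobiTheta₂_term 0 hτ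
  rw [← theta00_eq] at h
  rw [show (fun n : ℤ => cexp ((π:ℂ) * I * (n:ℂ)^2 * τ))
      = fun n : ℤ => jacobiTheta₂_term n 0 τ from funext (term00_eq τ)]
  exact h

lemma hasSum_theta01 (hτ : 0 < τ.im) :
    HasSum (fun n : ℤ => (-1:ℂ)^n * cexp ((π:ℂ) * I * (n:ℂ)^2 * τ)) (theta01 τ) := by
  have h := hasSum_jacobiTheta₂_term (1/2) hτ
  rw [← theta01_eq] at h
  rw [show (fun n : ℤ => (-1:ℂ)^n * cexp ((π:ℂ) * I * (n:ℂ)^2 * τ))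
      = fun n : ℤ => jacobiTheta₂_term n (1/2) τ from funext (term01_eq τ)]
  exact h

lemma hasSum_theta10 (hτ : 0 < τ.im) :
    HasSum (fun n : ℤ => cexp ((π:ℂ) * I * ((n:ℂ) + 1/2)^2 * τ)) (theta10 τ) := by
  have h := (hasSum_jacobiTheta₂_term (τ/2) hτ).mul_left (cexp ((π:ℂ) * I * τ / 4))
  rw [← theta10_eq] at h
  rw [show (fun n : ℤ => cexp ((π:ℂ) * I * ((n:ℂ) + 1/2)^2 * τ))
      = fun n : ℤ => cexp ((π:ℂ) * I * τ / 4) * jacobiTheta₂_term n (τ/2) τ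
      from funext (term10_eq τ)]
  exact h

lemma summable_norm_jt (z : ℂ) (hτ : 0 < τ.im) :
    Summable fun n : ℤ => ‖jacobiTheta₂_term n z τ‖ := by
  apply Summable.of_nonneg_of_le (fun n => norm_nonneg _) (fun n => ?_)
    ((summable_pow_mul_jacobiTheta₂_term_bound |z.im| hτ 0).congr (fun n => by
      rw [pow_zero, one_mul]))
  exact norm_jacobiTheta₂_term_le hτ (le_refl |z.im|) (le_refl τ.im) n

lemma sn00 (hτ : 0 < τ.im) :
    Summable fun n : ℤ => ‖cexp ((π:ℂ) * I * (n:ℂ)^2 * τ)‖ := by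
  refine (summable_norm_jt 0 hτ).congr fun n => ?_
  rw [term00_eq]

lemma sn01 (hτ : 0 < τ.im) :
    Summable fun n : ℤ => ‖(-1:ℂ)^n * cexp ((π:ℂ) * I * (n:ℂ)^2 * τ)‖ := by
  refine (summable_norm_jt (1/2) hτ).congr fun n => ?_
  rw [term01_eq]

lemma sn10 (hτ : 0 < τ.im) :
    Summable fun n : ℤ => ‖cexp ((π:ℂ) * I * ((n:ℂ) + 1/2)^2 * τ)‖ := by
  refine (((summable_norm_jt (τ/2) hτ).mul_left ‖cexp ((π:ℂ) * I * τ / 4)‖).congr fun n => ?_)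
  rw [← norm_mul, term10_eq]

lemma hasSum_mul_prod {g h : ℤ → ℂ} {A B : ℂ} (hg : HasSum g A) (hh : HasSum h B)
    (hg' : Summable fun n => ‖g n‖) (hh' : Summable fun n => ‖h n‖) :
    HasSum (fun x : ℤ × ℤ => g x.1 * h x.2) (A * B) := by
  have S : Summable fun x : ℤ × ℤ => g x.1 * h x.2 := summable_mul_of_summable_norm hg' hh'
  have ht := tsum_mul_tsum_of_summable_norm hg' hh'
  rw [hg.tsum_eq, hh.tsum_eq] at ht
  exact ht ▸ S.hasSum

lemma hasSum_sum_type {α : Type*} {β : Type*} {f : α ⊕ β → ℂ} {a b : ℂ}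
    (h1 : HasSum (fun i => f (Sum.inl i)) a) (h2 : HasSum (fun j => f (Sum.inr j)) b) :
    HasSum f (a + b) := by
  refine HasSum.add_isCompl Set.isCompl_range_inl_range_inr ?_ ?_
  · exact (Equiv.ofInjective Sum.inl Sum.inl_injective).hasSum_iff.mp h1
  · exact (Equiv.ofInjective Sum.inr Sum.inr_injective).hasSum_iff.mp h2

end Sums

section Doubling
variable {τ : ℂ}

def pairEquiv1 : (ℤ×ℤ) ⊕ (ℤ×ℤ) ≃ ℤ×ℤ where
  toFun q := Sum.elim (fun p => (p.1+p.2, p.1-p.2)) (fun p => (p.1+p.2+1, p.1-p.2)) q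
  invFun p := if (p.1+p.2) % 2 = 0 then Sum.inl ((p.1+p.2)/2, (p.1-p.2)/2)
              else Sum.inr ((p.1+p.2-1)/2, (p.1-p.2-1)/2)
  left_inv q := by
    rcases q with ⟨a,b⟩|⟨a,b⟩ <;> dsimp only [Sum.elim_inl, Sum.elim_inr] <;> split_ifs with h <;>
      first
      | (simp only [Sum.inl.injEq, Sum.inr.injEq, Prod.mk.injEq]; omega)
      | (exfalso; omega)
  right_inv p := by
    rcases p with ⟨u,v⟩
    dsimp only
    by_cases h : (u+v) % 2 = 0
    · rw [if_pos h]; simp only [Sum.elim_inl, Prod.mk.injEq]; omega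
    · rw [if_neg h]; simp only [Sum.elim_inr, Prod.mk.injEq]; omega

def pairEquiv2 : (ℤ×ℤ) ⊕ (ℤ×ℤ) ≃ ℤ×ℤ where
  toFun q := Sum.elim (fun p => (p.1+p.2, p.1-p.2-1)) (fun p => (p.1+p.2, p.1-p.2)) q
  invFun p := if (p.1+p.2) % 2 = 0 then Sum.inr ((p.1+p.2)/2, (p.1-p.2)/2)
              else Sum.inl ((p.1+p.2+1)/2, (p.1-p.2-1)/2)
  left_inv q := by
    rcases q with ⟨a,b⟩|⟨a,b⟩ <;> dsimp only [Sum.elim_inl, Sum.elim_inr] <;> split_ifs with h <;>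
      first
      | (simp only [Sum.inl.injEq, Sum.inr.injEq, Prod.mk.injEq]; omega)
      | (exfalso; omega)
  right_inv p := by
    rcases p with ⟨u,v⟩
    dsimp only
    by_cases h : (u+v) % 2 = 0
    · rw [if_pos h]; simp only [Sum.elim_inr, Prod.mk.injEq]; omega
    · rw [if_neg h]; simp only [Sum.elim_inl, Prod.mk.injEq]; omega

lemma im_two_mul (τ : ℂ) : (2*τ).im = 2 * τ.im := by
  simp [Complex.mul_im]

lemma dbl00 (hτ : 0 < τ.im) :
    theta00 τ ^ 2 = theta00 (2*τ) ^ 2 + theta10 (2*τ) ^ 2 := by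
  have h2 : 0 < (2*τ).im := by rw [im_two_mul]; linarith
  have L := hasSum_mul_prod (hasSum_theta00 hτ) (hasSum_theta00 hτ) (sn00 hτ) (sn00 hτ)
  have R1 := hasSum_mul_prod (hasSum_theta00 h2) (hasSum_theta00 h2) (sn00 h2) (sn00 h2)
  have R2 := hasSum_mul_prod (hasSum_theta10 h2) (hasSum_theta10 h2) (sn10 h2) (sn10 h2)
  have R : HasSum (fun q : (ℤ×ℤ) ⊕ (ℤ×ℤ) =>
      cexp ((π:ℂ) * I * (((pairEquiv1 q).1 : ℤ):ℂ)^2 * τ) *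
        cexp ((π:ℂ) * I * (((pairEquiv1 q).2 : ℤ):ℂ)^2 * τ))
      (theta00 (2*τ) * theta00 (2*τ) + theta10 (2*τ) * theta10 (2*τ)) := by
    refine hasSum_sum_type ?_ ?_
    · refine R1.congr_fun fun x => ?_
      simp only [pairEquiv1, Equiv.coe_fn_mk, Sum.elim_inl]
      rw [← Complex.exp_add, ← Complex.exp_add]
      congr 1
      push_cast
      ring
    · refine R2.congr_fun fun x => ?_
      simp only [pairEquiv1, Equiv.coe_fn_mk, Sum.elim_inr]
      rw [← Complex.exp_add, ← Complex.exp_add]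
      congr 1
      push_cast
      ring
  have R' := (Equiv.hasSum_iff (e := pairEquiv1)
    (f := fun x : ℤ×ℤ => cexp ((π:ℂ) * I * ((x.1 : ℤ):ℂ)^2 * τ) *
      cexp ((π:ℂ) * I * ((x.2 : ℤ):ℂ)^2 * τ))).mp R
  have key := L.unique R'
  rw [sq, sq, sq, key]

lemma signed_pair_even (u v : ℤ) (X Y : ℂ) (h : Even (u+v)) :
    ((-1:ℂ)^u * X) * ((-1:ℂ)^v * Y) = X * Y := by
  have e : ((-1:ℂ)^u * X) * ((-1:ℂ)^v * Y) = ((-1:ℂ)^(u+v)) * (X*Y) := by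
    rw [zpow_add₀ (by norm_num : (-1:ℂ) ≠ 0)]; ring
  rw [e, Even.neg_one_zpow h, one_mul]

lemma signed_pair_odd (u v : ℤ) (X Y : ℂ) (h : Odd (u+v)) :
    ((-1:ℂ)^u * X) * ((-1:ℂ)^v * Y) = -(X * Y) := by
  have e : ((-1:ℂ)^u * X) * ((-1:ℂ)^v * Y) = ((-1:ℂ)^(u+v)) * (X*Y) := by
    rw [zpow_add₀ (by norm_num : (-1:ℂ) ≠ 0)]; ring
  rw [e, Odd.neg_one_zpow h, neg_one_mul]

lemma dbl01 (hτ : 0 < τ.im) :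
    theta01 τ ^ 2 = theta00 (2*τ) ^ 2 - theta10 (2*τ) ^ 2 := by
  have h2 : 0 < (2*τ).im := by rw [im_two_mul]; linarith
  have L := hasSum_mul_prod (hasSum_theta01 hτ) (hasSum_theta01 hτ) (sn01 hτ) (sn01 hτ)
  have R1 := hasSum_mul_prod (hasSum_theta00 h2) (hasSum_theta00 h2) (sn00 h2) (sn00 h2)
  have R2 := (hasSum_mul_prod (hasSum_theta10 h2) (hasSum_theta10 h2) (sn10 h2) (sn10 h2)).neg
  have R : HasSum (fun q : (ℤ×ℤ) ⊕ (ℤ×ℤ) =>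
      ((-1:ℂ)^((pairEquiv1 q).1) * cexp ((π:ℂ) * I * (((pairEquiv1 q).1 : ℤ):ℂ)^2 * τ)) *
        ((-1:ℂ)^((pairEquiv1 q).2) * cexp ((π:ℂ) * I * (((pairEquiv1 q).2 : ℤ):ℂ)^2 * τ)))
      (theta00 (2*τ) * theta00 (2*τ) + -(theta10 (2*τ) * theta10 (2*τ))) := by
    refine hasSum_sum_type ?_ ?_
    · refine R1.congr_fun fun x => ?_
      simp only [pairEquiv1, Equiv.coe_fn_mk, Sum.elim_inl]
      rw [signed_pair_even _ _ _ _ ⟨x.1, by ring⟩, ← Complex.exp_add, ← Complex.exp_add]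
      congr 1
      push_cast
      ring
    · refine R2.congr_fun fun x => ?_
      simp only [pairEquiv1, Equiv.coe_fn_mk, Sum.elim_inr]
      rw [signed_pair_odd _ _ _ _ ⟨x.1, by ring⟩, ← Complex.exp_add, ← Complex.exp_add]
      congr 2
      push_cast
      ring
  have R' := (Equiv.hasSum_iff (e := pairEquiv1)
    (f := fun x : ℤ×ℤ => ((-1:ℂ)^(x.1) * cexp ((π:ℂ) * I * ((x.1 : ℤ):ℂ)^2 * τ)) *
      ((-1:ℂ)^(x.2) * cexp ((π:ℂ) * I * ((x.2 : ℤ):ℂ)^2 * τ)))).mp R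
  have key := L.unique R'
  rw [sq, sq, sq, key]
  ring

lemma dbl10 (hτ : 0 < τ.im) :
    theta10 τ ^ 2 = 2 * theta00 (2*τ) * theta10 (2*τ) := by
  have h2 : 0 < (2*τ).im := by rw [im_two_mul]; linarith
  have L := hasSum_mul_prod (hasSum_theta10 hτ) (hasSum_theta10 hτ) (sn10 hτ) (sn10 hτ)
  have R1 := hasSum_mul_prod (hasSum_theta00 h2) (hasSum_theta10 h2) (sn00 h2) (sn10 h2)
  have R2 := hasSum_mul_prod (hasSum_theta10 h2) (hasSum_theta00 h2) (sn10 h2) (sn00 h2)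
  have R : HasSum (fun q : (ℤ×ℤ) ⊕ (ℤ×ℤ) =>
      cexp ((π:ℂ) * I * ((((pairEquiv2 q).1 : ℤ):ℂ) + 1/2)^2 * τ) *
        cexp ((π:ℂ) * I * ((((pairEquiv2 q).2 : ℤ):ℂ) + 1/2)^2 * τ))
      (theta00 (2*τ) * theta10 (2*τ) + theta10 (2*τ) * theta00 (2*τ)) := by
    refine hasSum_sum_type ?_ ?_
    · refine R1.congr_fun fun x => ?_
      simp only [pairEquiv2, Equiv.coe_fn_mk, Sum.elim_inl]
      rw [← Complex.exp_add, ← Complex.exp_add]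
      congr 1
      push_cast
      ring
    · refine R2.congr_fun fun x => ?_
      simp only [pairEquiv2, Equiv.coe_fn_mk, Sum.elim_inr]
      rw [← Complex.exp_add, ← Complex.exp_add]
      congr 1
      push_cast
      ring
  have R' := (Equiv.hasSum_iff (e := pairEquiv2)
    (f := fun x : ℤ×ℤ => cexp ((π:ℂ) * I * (((x.1 : ℤ):ℂ) + 1/2)^2 * τ) *
      cexp ((π:ℂ) * I * (((x.2 : ℤ):ℂ) + 1/2)^2 * τ))).mp R
  have key := L.unique R'
  rw [sq, key]
  ring

lemma jacobi_identity (hτ : 0 < τ.im) :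
    theta00 τ ^ 4 = theta01 τ ^ 4 + theta10 τ ^ 4 := by
  have d1 := dbl00 hτ
  have d2 := dbl01 hτ
  have d3 := dbl10 hτ
  linear_combination (theta00 τ^2 + theta00 (2*τ)^2 + theta10 (2*τ)^2) * d1
    - (theta01 τ^2 + theta00 (2*τ)^2 - theta10 (2*τ)^2) * d2
    - (theta10 τ^2 + 2*theta00 (2*τ)*theta10 (2*τ)) * d3

end Doubling

section HighIm
variable {τ : ℂ}

lemma theta00_eq_jacobiTheta : theta00 = jacobiTheta := rfl

lemma exp_two_gt : (3:ℝ) < rexp 2 := by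
  have := Real.add_one_lt_exp (by norm_num : (2:ℝ) ≠ 0)
  linarith

lemma r_lt_third (h : 2/π ≤ τ.im) : rexp (-π * τ.im) < 1/3 := by
  have hπ := pi_pos
  have h2 : (2:ℝ) ≤ π * τ.im := by
    rw [div_le_iff₀ hπ] at h
    linarith [h]
  calc rexp (-π * τ.im) ≤ rexp (-2) := Real.exp_le_exp.mpr (by linarith)
    _ < 1/3 := by
        rw [Real.exp_neg, show (1:ℝ)/3 = 3⁻¹ by norm_num]
        exact inv_strictAnti₀ (by norm_num) exp_two_gt

lemma im_pos_of_high (h : 2/π ≤ τ.im) : 0 < τ.im :=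
  lt_of_lt_of_le (by positivity) h

lemma theta00_ne_zero_high (h : 2/π ≤ τ.im) : theta00 τ ≠ 0 := by
  have hτ := im_pos_of_high h
  intro h0
  have hb := norm_jacobiTheta_sub_one_le hτ
  rw [← theta00_eq_jacobiTheta, h0, zero_sub, norm_neg, norm_one] at hb
  set r : ℝ := rexp (-π * τ.im) with hrdef
  have hr1 : r < 1/3 := r_lt_third h
  have hr0 : 0 < r := Real.exp_pos _
  have hlt : 2 / (1 - r) * r < 1 := by
    rw [div_mul_eq_mul_div, div_lt_one (by linarith)]
    linarith
  linarith

lemma theta01_ne_zero_high (h : 2/π ≤ τ.im) : theta01 τ ≠ 0 := by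
  rw [← theta00_T]
  exact theta00_ne_zero_high (by simpa using h)

lemma theta10_ne_zero_high (h : 2/π ≤ τ.im) : theta10 τ ≠ 0 := by
  have hτ := im_pos_of_high h
  set r : ℝ := rexp (-π * τ.im) with hrdef
  have hr1 : r < 1/3 := r_lt_third h
  have hr0 : 0 < r := Real.exp_pos _
  set g : ℤ → ℂ := fun n => cexp (((n:ℂ)^2+n) * ((π:ℂ)*I*τ)) with hg
  have hterm_eq : ∀ n : ℤ, jacobiTheta₂_term n (τ/2) τ = g n := by
    intro n
    rw [hg, jacobiTheta₂_term]
    congr 1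
    ring
  have hZsum : HasSum (fun n : ℤ => jacobiTheta₂_term n (τ/2) τ) (jacobiTheta₂ (τ/2) τ) :=
    hasSum_jacobiTheta₂_term (τ/2) hτ
  have hSummNat : Summable (fun n : ℕ => g n) :=
    (hZsum.summable.congr hterm_eq).comp_injective Nat.cast_injective
  set A : ℂ := ∑' n : ℕ, g n with hA
  have hAsum : HasSum (fun n : ℕ => g n) A := hSummNat.hasSum
  have hBsum : HasSum (fun n : ℕ => g (-(n+1))) A := by
    refine hAsum.congr_fun fun n => ?_
    simp only [hg]
    exact congrArg cexp (by push_cast; ring)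
  have hZ : HasSum g (A + A) := hAsum.of_nat_of_neg_add_one hBsum
  have hJT : jacobiTheta₂ (τ/2) τ = A + A :=
    ((hZsum.congr_fun fun n => (hterm_eq n).symm).unique hZ)
  -- bound ‖A - 1‖
  have hnorm : ∀ m : ℕ, ‖g (m:ℤ)‖ = r ^ (m^2+m) := by
    intro m
    have he : ((((m:ℤ):ℂ))^2 + ((m:ℤ):ℂ)) * ((π:ℂ)*I*τ)
        = (((m^2+m : ℕ) : ℝ) : ℂ) * ((π:ℂ)*I*τ) := by
      push_cast
      ring
    simp only [hg]
    rw [he, Complex.norm_exp, re_ofReal_mul]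
    have hre : ((π:ℂ)*I*τ).re = -π * τ.im := by
      rw [show (π:ℂ)*I*τ = (π:ℝ) * (τ*I) from by push_cast; ring, re_ofReal_mul, mul_I_re]
      ring
    rw [hre, show ((m^2+m:ℕ):ℝ) * (-π * τ.im) = ((m^2+m:ℕ):ℝ) * (-π * τ.im) from rfl]
    rw [Real.exp_nat_mul]
  have hs : HasSum (fun n : ℕ => r^(n+1)) (r/(1-r)) := by
    have hgeo := (hasSum_geometric_of_lt_one hr0.le (by linarith : r < 1)).mul_left r
    rw [← div_eq_mul_inv] at hgeo
    exact hgeo.congr_fun fun n => by rw [pow_succ']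
  have hterm_le : ∀ n : ℕ, ‖g ((n:ℤ)+1)‖ ≤ r^(n+1) := by
    intro n
    have : ((n:ℤ)+1) = ((n+1 : ℕ) : ℤ) := by push_cast; ring
    rw [this, hnorm]
    refine pow_le_pow_of_le_one hr0.le (by linarith) ?_
    nlinarith
  have hshift : HasSum (fun n : ℕ => g ((n:ℤ)+1)) (A - 1) := by
    have h1 := (hasSum_nat_add_iff' (f := fun n : ℕ => g n) 1).mpr hAsum
    simp only [Finset.sum_range_one, Nat.cast_zero] at h1
    have hg0 : g (0:ℤ) = 1 := by
      rw [hg]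
      simp
    rw [hg0] at h1
    exact h1.congr_fun fun n => congrArg g (by push_cast; ring)
  have haux : Summable fun n : ℕ => ‖g ((n:ℤ)+1)‖ :=
    Summable.of_nonneg_of_le (fun _ => norm_nonneg _) hterm_le hs.summable
  have hA1 : ‖A - 1‖ ≤ r/(1-r) := by
    rw [← hshift.tsum_eq]
    exact (norm_tsum_le_tsum_norm haux).trans
      ((haux.tsum_mono hs.summable hterm_le).trans_eq hs.tsum_eq)
  have hAne : A ≠ 0 := by
    intro h0
    rw [h0, zero_sub, norm_neg, norm_one] at hA1
    have : r/(1-r) < 1 := by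
      rw [div_lt_one (by linarith)]
      linarith
    linarith
  rw [theta10_eq τ, hJT]
  exact mul_ne_zero (Complex.exp_ne_zero _) (fun hc => hAne (add_self_eq_zero.mp hc))

end HighIm

section Reduction
variable {τ : ℂ}

def thNZ (τ : ℂ) : Prop := theta00 τ ≠ 0 ∧ theta01 τ ≠ 0 ∧ theta10 τ ≠ 0

lemma thNZ_high (h : 2/π ≤ τ.im) : thNZ τ :=
  ⟨theta00_ne_zero_high h, theta01_ne_zero_high h, theta10_ne_zero_high h⟩

lemma thNZ_add_one (τ : ℂ) : thNZ (τ+1) ↔ thNZ τ := by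
  unfold thNZ
  rw [theta00_T, theta01_T, theta10_T]
  simp only [mul_ne_zero_iff]
  have := Complex.exp_ne_zero ((π:ℂ) * I / 4)
  tauto

lemma thNZ_sub_one (τ : ℂ) : thNZ (τ-1) ↔ thNZ τ := by
  have := thNZ_add_one (τ-1)
  rw [sub_add_cancel] at this
  exact this.symm

lemma thNZ_int (m : ℤ) : ∀ τ : ℂ, thNZ (τ + m) ↔ thNZ τ := by
  induction m using Int.induction_on with
  | zero => simp
  | succ k ih =>
      intro τ
      have : τ + ((k:ℤ)+1 : ℤ) = (τ + (k:ℤ)) + 1 := by push_cast; ring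
      rw [this, thNZ_add_one, ih]
  | pred k ih =>
      intro τ
      have : τ + (-(k:ℤ)-1 : ℤ) = (τ + (-(k:ℤ):ℤ)) - 1 := by push_cast; ring
      rw [this, thNZ_sub_one, ih]

lemma thNZ_S (hτ : 0 < τ.im) : thNZ (-1/τ) ↔ thNZ τ := by
  unfold thNZ
  rw [theta00_S hτ, theta01_S hτ, theta10_S hτ]
  simp only [mul_ne_zero_iff]
  have := sqfac_ne_zero hτ
  tauto

lemma neg_inv_im (τ : ℂ) : (-1/τ).im = τ.im / Complex.normSq τ := by
  rw [neg_div, neg_im, one_div, Complex.inv_im]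
  ring

lemma K_facts : 1 < ((1:ℝ)/4 + (2/π)^2)⁻¹ ∧ (0:ℝ) < 1/4 + (2/π)^2 := by
  have h3 : (3:ℝ) < π := pi_gt_three
  have hpos : (0:ℝ) < 1/4 + (2/π)^2 := by positivity
  refine ⟨?_, hpos⟩
  rw [lt_inv_comm₀ one_pos hpos]
  have h1 : (2/π) < 2/3 := by
    apply div_lt_div_of_pos_left <;> norm_num
    exact h3
  have h2 : (2/π)^2 < (2/3)^2 := by
    have : (0:ℝ) < 2/π := by positivity
    nlinarith
  nlinarith

lemma thNZ_all (τ : ℂ) (hτ : 0 < τ.im) : thNZ τ := by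
  obtain ⟨hK1, hKpos⟩ := K_facts
  set K : ℝ := ((1:ℝ)/4 + (2/π)^2)⁻¹ with hK
  have hKpos' : 0 < K := by positivity
  suffices H : ∀ n : ℕ, ∀ τ : ℂ, 0 < τ.im → 2/π ≤ K^n * τ.im → thNZ τ by
    obtain ⟨n, hn⟩ := pow_unbounded_of_one_lt ((2/π)/τ.im) hK1
    refine H n τ hτ ?_
    rw [div_lt_iff₀ hτ] at hn
    linarith
  intro n
  induction n with
  | zero =>
      intro τ hτ h0
      exact thNZ_high (by simpa using h0)
  | succ n ih =>
      intro τ hτ hKn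
      by_cases hbig : 2/π ≤ τ.im
      · exact thNZ_high hbig
      push_neg at hbig
      set m : ℤ := round τ.re with hm
      set τ' : ℂ := τ + ((-m : ℤ) : ℂ) with hτ'def
      have him' : τ'.im = τ.im := by simp [hτ'def]
      have hre' : |τ'.re| ≤ 1/2 := by
        have : τ'.re = τ.re - (m:ℝ) := by simp [hτ'def]; push_cast; ring
        rw [this, hm]
        exact abs_sub_round τ.re
      have hτ'pos : 0 < τ'.im := by rw [him']; exact hτ
      have hτ'ne : τ' ≠ 0 := tau_ne_zero hτ'pos
      have hns_pos : 0 < Complex.normSq τ' := Complex.normSq_pos.mpr hτ'ne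
      have hns : Complex.normSq τ' < K⁻¹ := by
        rw [hK, inv_inv, Complex.normSq_apply]
        have h1 : τ'.re * τ'.re ≤ 1/4 := by nlinarith [abs_nonneg τ'.re, _root_.sq_abs τ'.re, hre']
        have h2 : τ'.im * τ'.im < (2/π)^2 := by
          rw [him']
          nlinarith [hτ]
        nlinarith
      have hσim : (-1/τ').im = τ.im / Complex.normSq τ' := by
        rw [neg_inv_im, him']
      have hσpos : 0 < (-1/τ').im := by
        rw [hσim]; positivity
      have hgrow : K * τ.im ≤ (-1/τ').im := by
        rw [hσim]
        have h5 : τ.im / K⁻¹ ≤ τ.im / Complex.normSq τ' :=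
          div_le_div_of_nonneg_left hτ.le hns_pos hns.le
        have h6 : τ.im / K⁻¹ = K * τ.im := by
          rw [div_eq_mul_inv, inv_inv]
          ring
        linarith
      have hσK : 2/π ≤ K^n * (-1/τ').im := by
        calc 2/π ≤ K^(n+1) * τ.im := hKn
          _ = K^n * (K * τ.im) := by ring
          _ ≤ K^n * (-1/τ').im := by
              exact mul_le_mul_of_nonneg_left hgrow (by positivity)
      have hPσ := ih (-1/τ') hσpos hσK
      have hPτ' : thNZ τ' := (thNZ_S hτ'pos).mp hPσ
      have : thNZ (τ' + ((m:ℤ):ℂ)) := (thNZ_int m τ').mpr hPτ'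
      rwa [hτ'def, show τ + ((-m : ℤ):ℂ) + ((m:ℤ):ℂ) = τ from by push_cast; ring] at this

end Reduction

section Lambda
variable {τ : ℂ}

lemma lambda_ne_zero (hτ : 0 < τ.im) : lambdaFn τ ≠ 0 := by
  obtain ⟨h0, h1, h10⟩ := thNZ_all τ hτ
  exact div_ne_zero (pow_ne_zero _ h10) (pow_ne_zero _ h0)

lemma lambda_ne_one (hτ : 0 < τ.im) : lambdaFn τ ≠ 1 := by
  obtain ⟨h0, h1, h10⟩ := thNZ_all τ hτ
  intro h
  rw [lambdaFn, div_eq_one_iff_eq (pow_ne_zero 4 h0)] at h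
  have hJ := jacobi_identity hτ
  have hz : theta01 τ ^ 4 = 0 := by linear_combination -hJ - h
  exact pow_ne_zero 4 h1 hz

lemma lambda_S (hτ : 0 < τ.im) : lambdaFn (-1/τ) = 1 - lambdaFn τ := by
  obtain ⟨h0, h1, h10⟩ := thNZ_all τ hτ
  have hc := sqfac_ne_zero hτ
  have hJ := jacobi_identity hτ
  rw [lambdaFn, lambdaFn, theta10_S hτ, theta00_S hτ, mul_pow, mul_pow,
      mul_div_mul_left _ _ (pow_ne_zero 4 hc)]
  rw [eq_sub_iff_add_eq, ← add_div, div_eq_one_iff_eq (pow_ne_zero 4 h0)]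
  linear_combination -hJ

lemma exp_quarter_pow : cexp ((π:ℂ) * I / 4) ^ 4 = -1 := by
  rw [← Complex.exp_nat_mul]
  rw [show (4:ℕ) * ((π:ℂ) * I / 4) = (π:ℂ) * I from by push_cast; ring, Complex.exp_pi_mul_I]

lemma lambda_T (hτ : 0 < τ.im) : lambdaFn (τ+1) = lambdaFn τ / (lambdaFn τ - 1) := by
  obtain ⟨h0, h1, h10⟩ := thNZ_all τ hτ
  have hJ := jacobi_identity hτ
  have hl1 := lambda_ne_one hτ
  have ha : theta00 τ ^ 4 ≠ 0 := pow_ne_zero 4 h0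
  have hb : theta01 τ ^ 4 ≠ 0 := pow_ne_zero 4 h1
  have hlam : lambdaFn τ = theta10 τ ^ 4 / theta00 τ ^ 4 := rfl
  have hca : theta10 τ ^ 4 - theta00 τ ^ 4 ≠ 0 := by
    refine sub_ne_zero.mpr fun h => hl1 ?_
    rw [hlam, h, div_self ha]
  have A : lambdaFn (τ+1) = -(theta10 τ ^ 4 / theta01 τ ^ 4) := by
    rw [lambdaFn, theta10_T, theta00_T, mul_pow, exp_quarter_pow]
    ring
  rw [A, hlam]
  field_simp
  linear_combination hJ
end Lambda

/-- `λ` never takes values 0, 1 on `ℍ`, and its transformation under `W` and `W²`. -/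
theorem lambda_W_action (τ : ℂ) (hτ : 0 < τ.im) :
    lambdaFn τ ≠ 0 ∧ lambdaFn τ ≠ 1 ∧
    lambdaFn (-(τ + 1) / τ) = 1 - 1 / lambdaFn τ ∧
    lambdaFn (-1 / (τ + 1)) = 1 / (1 - lambdaFn τ) := by
  have hl0 := lambda_ne_zero hτ
  have hl1 := lambda_ne_one hτ
  refine ⟨hl0, hl1, ?_, ?_⟩
  · have hσim : 0 < (-1/τ).im := by
      rw [neg_inv_im]
      have := Complex.normSq_pos.mpr (tau_ne_zero hτ)
      positivity
    have hσ1im : 0 < ((-1/τ) - 1).im := by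
      simpa using hσim
    have hT := lambda_T hσ1im
    rw [sub_add_cancel] at hT
    have hS := lambda_S hτ
    have harg : -(τ+1)/τ = (-1/τ) - 1 := by
      rw [div_eq_iff (tau_ne_zero hτ), sub_mul, div_mul_cancel₀ _ (tau_ne_zero hτ)]
      ring
    rw [harg]
    have hx1 : lambdaFn ((-1/τ) - 1) - 1 ≠ 0 := sub_ne_zero.mpr (lambda_ne_one hσ1im)
    have heq : lambdaFn ((-1/τ) - 1) / (lambdaFn ((-1/τ) - 1) - 1) = 1 - lambdaFn τ := by
      rw [← hT, hS]
    rw [div_eq_iff hx1] at heq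
    field_simp
    rw [neg_div] at heq
    linear_combination heq
  · have h1im : 0 < (τ+1).im := by simpa using hτ
    have hS := lambda_S h1im
    have hT := lambda_T hτ
    have hd : lambdaFn τ - 1 ≠ 0 := sub_ne_zero.mpr hl1
    have hd' : 1 - lambdaFn τ ≠ 0 := fun h => hd (by linear_combination -h)
    rw [hS, hT]
    field_simp
    ring
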